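/- Let D be a distribution over [n] with probabilities p_k = τ_k/∑_j τ_j where τ_k = min(1, 20·u_k·log d) and u_k ≥ σ_k(A) (leverage score overestimates). For x̃ ∈ ℝ^d define the change-of-basis functions g_i(x) := (1/p_i)·f_i((AᵀA)^{-1/2}x) where f_i(x) = ψ_i(a_iᵀx) and ψ_i'' ≤ M. Then tr(∇²g_i(x)) ≤ (∑_j τ_j)·M·(σ_i(A)/τ_i) ≤ (∑_j τ_j)·M for every i with τ_i > 0; in particular each g_i is ((∑_j τ_j)·M)-smooth. -/

import Mathlib

open Matrix BigOperators

/-- The square root of a positive semidefinite matrix, as `Matrix.PosSemidef.sqrt` was defined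
in the older Mathlib (removed since). -/
noncomputable def posSemidefSqrt {n : Type*} [Fintype n] [DecidableEq n]
    {A : Matrix n n ℝ} (hA : A.PosSemidef) : Matrix n n ℝ :=
  hA.1.eigenvectorUnitary.1 * diagonal ((↑) ∘ (√·) ∘ hA.1.eigenvalues) *
    (star hA.1.eigenvectorUnitary : Matrix n n ℝ)

theorem stmt_18 {n d : ℕ} (hd : 2 ≤ d) (A : Matrix (Fin n) (Fin d) ℝ)
    (hPD : (Aᵀ * A).PosDef) (hPSD : (Aᵀ * A).PosSemidef)
    (ψ : Fin n → ℝ → ℝ) (M : ℝ) (hM : 1 ≤ M)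
    (hψ : ∀ i t, deriv (deriv (ψ i)) t ≤ M) (hψ0 : ∀ i t, 0 ≤ deriv (deriv (ψ i)) t)
    (u τ p : Fin n → ℝ)
    (hu : ∀ k, A k ⬝ᵥ ((Aᵀ * A)⁻¹ *ᵥ A k) ≤ u k)
    (hτ : ∀ k, τ k = min 1 (20 * u k * Real.log d))
    (hp : ∀ k, p k = τ k / ∑ j, τ j) :
    ∀ i, 0 < τ i → ∀ x : Fin d → ℝ,
      ((1 / p i) • (deriv (deriv (ψ i)) (((posSemidefSqrt hPSD)⁻¹ *ᵥ A i) ⬝ᵥ x) •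
          Matrix.vecMulVec ((posSemidefSqrt hPSD)⁻¹ *ᵥ A i) ((posSemidefSqrt hPSD)⁻¹ *ᵥ A i))).trace ≤
        (∑ j, τ j) * M * ((A i ⬝ᵥ ((Aᵀ * A)⁻¹ *ᵥ A i)) / τ i) ∧
      (∑ j, τ j) * M * ((A i ⬝ᵥ ((Aᵀ * A)⁻¹ *ᵥ A i)) / τ i) ≤ (∑ j, τ j) * M ∧
      ∀ v : Fin d → ℝ,
        v ⬝ᵥ (((1 / p i) • (deriv (deriv (ψ i)) (((posSemidefSqrt hPSD)⁻¹ *ᵥ A i) ⬝ᵥ x) •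
            Matrix.vecMulVec ((posSemidefSqrt hPSD)⁻¹ *ᵥ A i) ((posSemidefSqrt hPSD)⁻¹ *ᵥ A i))) *ᵥ v) ≤
          (∑ j, τ j) * M * (v ⬝ᵥ v) := by
  intro i hτi x
  set S : Matrix (Fin d) (Fin d) ℝ := posSemidefSqrt hPSD with hS
  -- S is symmetric
  have hSsym : Sᵀ = S := by
    rw [← Matrix.conjTranspose_eq_transpose_of_trivial]
    simp [hS, posSemidefSqrt, Matrix.star_eq_conjTranspose, Matrix.mul_assoc]
  have hSS : S * S = Aᵀ * A := by
    conv_rhs => rw [hPSD.1.spectral_theorem]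
    rw [Unitary.conjStarAlgAut_apply]
    have hU : (star hPSD.1.eigenvectorUnitary : Matrix (Fin d) (Fin d) ℝ) * hPSD.1.eigenvectorUnitary.1 = 1 :=
      Unitary.coe_star_mul_self _
    simp only [hS, posSemidefSqrt]
    rw [show ∀ U D V : Matrix (Fin d) (Fin d) ℝ, U * D * V * (U * D * V) = U * (D * (V * U) * D) * V by
      intro U D V; simp only [Matrix.mul_assoc], hU, Matrix.mul_one, diagonal_mul_diagonal]
    congr 3
    funext j
    simp [Real.mul_self_sqrt (hPSD.eigenvalues_nonneg j)]
  have hSinv : S⁻¹ * S⁻¹ = (Aᵀ * A)⁻¹ := by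
    rw [← Matrix.mul_inv_rev, hSS]
  -- w_k ⬝ w_k = σ_k
  have hww : ∀ k, (S⁻¹ *ᵥ A k) ⬝ᵥ (S⁻¹ *ᵥ A k) = A k ⬝ᵥ ((Aᵀ * A)⁻¹ *ᵥ A k) := by
    intro k
    rw [Matrix.dotProduct_mulVec, ← Matrix.mulVec_transpose,
      Matrix.transpose_nonsing_inv, hSsym, Matrix.mulVec_mulVec, hSinv,
      dotProduct_comm]
  have hσnn : ∀ k, 0 ≤ A k ⬝ᵥ ((Aᵀ * A)⁻¹ *ᵥ A k) := by
    intro k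
    rw [← hww k]
    exact Finset.sum_nonneg fun j _ => mul_self_nonneg _
  -- σ_k ≤ 1
  have hσle1 : ∀ k, A k ⬝ᵥ ((Aᵀ * A)⁻¹ *ᵥ A k) ≤ 1 := by
    intro k
    set v : Fin d → ℝ := (Aᵀ * A)⁻¹ *ᵥ A k with hv
    set σ : ℝ := A k ⬝ᵥ v with hσ
    have hkey : (Aᵀ * A) *ᵥ v = A k := by
      rw [hv, Matrix.mulVec_mulVec, Matrix.mul_nonsing_inv _ hPD.det_pos.ne'.isUnit,
        Matrix.one_mulVec]
    have h1 : v ⬝ᵥ ((Aᵀ * A) *ᵥ v) = σ := by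
      rw [hkey, dotProduct_comm]
    have h2 : v ⬝ᵥ ((Aᵀ * A) *ᵥ v) = (A *ᵥ v) ⬝ᵥ (A *ᵥ v) := by
      rw [← Matrix.mulVec_mulVec, Matrix.dotProduct_mulVec, Matrix.vecMul_transpose]
    have h3 : (A *ᵥ v) k = σ := rfl
    have h4 : ((A *ᵥ v) k) ^ 2 ≤ ∑ j, ((A *ᵥ v) j) ^ 2 :=
      Finset.single_le_sum (f := fun j => ((A *ᵥ v) j) ^ 2)
        (fun j _ => sq_nonneg _) (Finset.mem_univ k)
    have h5 : (A *ᵥ v) ⬝ᵥ (A *ᵥ v) = ∑ j, ((A *ᵥ v) j) ^ 2 := by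
      simp [dotProduct, sq]
    have hσσ : σ ^ 2 ≤ σ := by
      calc σ ^ 2 = ((A *ᵥ v) k) ^ 2 := by rw [h3]
        _ ≤ ∑ j, ((A *ᵥ v) j) ^ 2 := h4
        _ = (A *ᵥ v) ⬝ᵥ (A *ᵥ v) := h5.symm
        _ = σ := by rw [← h2, h1]
    nlinarith [hσnn k, hσσ]
  -- positivity of log d etc
  have hlog : (1 : ℝ) ≤ 20 * Real.log d := by
    have h2d : (2 : ℝ) ≤ (d : ℝ) := by exact_mod_cast hd
    have : Real.log 2 ≤ Real.log d := Real.log_le_log (by norm_num) h2d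
    nlinarith [Real.log_two_gt_d9]
  have hτnn : ∀ k, 0 ≤ τ k := by
    intro k
    rw [hτ k]
    have huk : 0 ≤ u k := le_trans (hσnn k) (hu k)
    have : 0 ≤ 20 * u k * Real.log d := by nlinarith
    exact le_min (by norm_num) this
  have hT : 0 < ∑ j, τ j :=
    lt_of_lt_of_le hτi (Finset.single_le_sum (fun j _ => hτnn j) (Finset.mem_univ i))
  -- σ_i ≤ τ_i
  set σ : ℝ := A i ⬝ᵥ ((Aᵀ * A)⁻¹ *ᵥ A i) with hσdef
  have hστ : σ ≤ τ i := by
    rw [hτ i]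
    refine le_min (hσle1 i) ?_
    have h1 : σ ≤ u i := hu i
    have h2 : 0 ≤ u i := le_trans (hσnn i) h1
    nlinarith
  set T : ℝ := ∑ j, τ j with hTdef
  set w : Fin d → ℝ := S⁻¹ *ᵥ A i with hwdef
  set c : ℝ := deriv (deriv (ψ i)) (w ⬝ᵥ x) with hcdef
  have hc0 : 0 ≤ c := hψ0 i _
  have hcM : c ≤ M := hψ i _
  have hpinv : 1 / p i = T / τ i := by
    rw [hp i]
    rw [one_div_div]
  have hwwσ : w ⬝ᵥ w = σ := hww i
  have hTM : 0 ≤ T * M := mul_nonneg hT.le (by linarith)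
  -- trace computation
  have htrace : ((1 / p i) • (c • Matrix.vecMulVec w w)).trace = (T / τ i) * c * σ := by
    rw [Matrix.trace_smul, Matrix.trace_smul, smul_eq_mul, smul_eq_mul, hpinv]
    have : (Matrix.vecMulVec w w).trace = σ := by
      rw [← hwwσ]
      simp [Matrix.trace, Matrix.vecMulVec_apply, Matrix.diag, dotProduct]
    rw [this]; ring
  have goal1 : (T / τ i) * c * σ ≤ T * M * (σ / τ i) := by
    have h1 : (T / τ i) * c * σ ≤ (T / τ i) * M * σ := by
      have hTτ : 0 ≤ T / τ i := div_nonneg hT.le hτi.le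
      have hσ0 : (0:ℝ) ≤ σ := hσnn i
      have h := mul_le_mul_of_nonneg_left (mul_le_mul_of_nonneg_right hcM hσ0) hTτ
      calc T / τ i * c * σ = T / τ i * (c * σ) := by ring
        _ ≤ T / τ i * (M * σ) := h
        _ = T / τ i * M * σ := by ring
    calc (T / τ i) * c * σ ≤ (T / τ i) * M * σ := h1
      _ = T * M * (σ / τ i) := by ring
  have goal2 : T * M * (σ / τ i) ≤ T * M := by
    have hσ1 : σ / τ i ≤ 1 := (div_le_one hτi).mpr hστ
    exact mul_le_of_le_one_right hTM hσ1
  refine ⟨by rw [htrace]; exact goal1, goal2, ?_⟩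
  intro v
  have hmv : (Matrix.vecMulVec w w) *ᵥ v = (w ⬝ᵥ v) • w := by
    ext j
    simp [Matrix.vecMulVec_apply, Matrix.mulVec, dotProduct, Finset.mul_sum,
      mul_comm, mul_assoc, mul_left_comm]
  have hLHS : v ⬝ᵥ (((1 / p i) • (c • Matrix.vecMulVec w w)) *ᵥ v)
      = (T / τ i) * c * (w ⬝ᵥ v) ^ 2 := by
    rw [Matrix.smul_mulVec, Matrix.smul_mulVec, hmv, hpinv]
    simp only [dotProduct_smul, smul_eq_mul]
    have : v ⬝ᵥ w = w ⬝ᵥ v := dotProduct_comm v w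
    rw [this]; ring
  rw [hLHS]
  have hcs : (w ⬝ᵥ v) ^ 2 ≤ σ * (v ⬝ᵥ v) := by
    have := Finset.sum_mul_sq_le_sq_mul_sq Finset.univ w v
    rw [← hwwσ]
    simpa [dotProduct, sq] using this
  have hTτc : 0 ≤ (T / τ i) * c := mul_nonneg (div_nonneg hT.le hτi.le) hc0
  calc (T / τ i) * c * (w ⬝ᵥ v) ^ 2 ≤ (T / τ i) * c * (σ * (v ⬝ᵥ v)) := by
        exact mul_le_mul_of_nonneg_left hcs hTτc
    _ = ((T / τ i) * c * σ) * (v ⬝ᵥ v) := by ring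
    _ ≤ (T * M) * (v ⬝ᵥ v) := by
        have hvv : 0 ≤ v ⬝ᵥ v := Finset.sum_nonneg fun j _ => mul_self_nonneg _
        exact mul_le_mul_of_nonneg_right (le_trans goal1 goal2) hvv
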